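/- arXiv:2605.22640 — 2 statements merged into one kernel-verified Lean document; each statement's English description precedes it below -/
import Mathlib

section
/- Let p be a product probability measure on ℝ^m with independent coordinates having marginals π_1, …, π_m, and let p⁺ be the truncation of p onto a measurable set A with c = p(A) > 0. Let π⁺_i be the i-th marginal of p⁺. Then the sum over i of KL(π⁺_i || π_i) is at most −log c. -/
open MeasureTheory
open scoped ENNReal

lemma lintegral_pi_prod_aux {m : ℕ} (μ : Fin m → Measure ℝ) [∀ i, SigmaFinite (μ i)]
    (f : Fin m → ℝ → ℝ≥0∞) (hf : ∀ i, Measurable (f i)) :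
    ∫⁻ x, ∏ i, f i (x i) ∂Measure.pi μ = ∏ i, ∫⁻ t, f i t ∂(μ i) := by
  induction m with
  | zero =>
      simp [Finset.univ_eq_empty, lintegral_const, Measure.pi_empty_univ]
  | succ n ih =>
      have hmp := measurePreserving_piFinSuccAbove μ 0
      have hmeas : Measurable fun z : ℝ × (Fin n → ℝ) =>
          f 0 z.1 * ∏ j : Fin n, f ((0 : Fin (n+1)).succAbove j) (z.2 j) := by
        exact ((hf 0).comp measurable_fst).mul
          (Finset.measurable_prod _ fun j _ =>
            ((hf _).comp ((measurable_pi_apply j).comp measurable_snd)))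
      have hcomp : ∀ x : Fin (n+1) → ℝ,
          (∏ i, f i (x i)) =
          f 0 ((MeasurableEquiv.piFinSuccAbove (fun _ => ℝ) 0) x).1 *
            ∏ j : Fin n, f ((0 : Fin (n+1)).succAbove j)
              (((MeasurableEquiv.piFinSuccAbove (fun _ => ℝ) 0) x).2 j) := by
        intro x
        rw [Fin.prod_univ_succ]
        rfl
      calc ∫⁻ x, ∏ i, f i (x i) ∂Measure.pi μ
          = ∫⁻ z, f 0 z.1 * ∏ j : Fin n, f ((0 : Fin (n+1)).succAbove j) (z.2 j)
              ∂((μ 0).prod (Measure.pi fun j => μ ((0 : Fin (n+1)).succAbove j))) := by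
            rw [← hmp.lintegral_comp hmeas]
            exact lintegral_congr fun x => hcomp x
        _ = (∫⁻ t, f 0 t ∂μ 0) *
              ∫⁻ y, ∏ j : Fin n, f ((0 : Fin (n+1)).succAbove j) (y j)
                ∂(Measure.pi fun j => μ ((0 : Fin (n+1)).succAbove j)) := by
            exact lintegral_prod_mul (f := f 0)
              (g := fun y : Fin n → ℝ => ∏ j : Fin n, f ((0 : Fin (n+1)).succAbove j) (y j))
              ((hf 0).aemeasurable)
              ((Finset.measurable_prod _ fun j _ =>
                (hf _).comp (measurable_pi_apply j)).aemeasurable)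
        _ = ∏ i, ∫⁻ t, f i t ∂μ i := by
            rw [ih (fun j => μ ((0 : Fin (n+1)).succAbove j)) _ (fun j => hf _),
              Fin.prod_univ_succ]
            rfl

/-- Let `p = ⨂ᵢ π_i` be a product probability measure on `ℝ^m` with independent
coordinates, and let `p⁺` be its truncation onto a measurable set `A` with
`c = p A > 0`. Let `π⁺_i` be the `i`-th marginal of `p⁺`. Then
`Σ_i KL(π⁺_i || π_i) ≤ - log c`. -/

theorem stmt_5 (m : ℕ) (π : Fin m → Measure ℝ) [∀ i, IsProbabilityMeasure (π i)]
    (A : Set (Fin m → ℝ)) (hA : MeasurableSet A)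
    (c : ℝ) (hc : ENNReal.ofReal c = Measure.pi π A) (hcpos : 0 < c)
    (pplus : Measure (Fin m → ℝ))
    (hpplus : pplus = (ENNReal.ofReal c)⁻¹ • (Measure.pi π).restrict A)
    (πplus : Fin m → Measure ℝ)
    (hπplus : ∀ i, πplus i = pplus.map (fun x => x i)) :
    ∑ i, ∫ x, Real.log (((πplus i).rnDeriv (π i) x).toReal) ∂(πplus i) ≤
      - Real.log c := by
  classical
  set p : Measure (Fin m → ℝ) := Measure.pi π with hp
  set k : ℝ≥0∞ := (ENNReal.ofReal c)⁻¹ with hkdef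
  have hc0 : ENNReal.ofReal c ≠ 0 := by
    simp [ENNReal.ofReal_eq_zero, not_le, hcpos]
  have hcoftop : ENNReal.ofReal c ≠ ∞ := ENNReal.ofReal_ne_top
  have hk_ne_top : k ≠ ∞ := by simp [hkdef, hc0]
  have hk_ne_zero : k ≠ 0 := by simp [hkdef, hcoftop]
  have hc_eq : ENNReal.ofReal c = ENNReal.ofReal c := rfl
  -- c ≤ 1
  have hc_le_one : c ≤ 1 := by
    have := prob_le_one (μ := p) (s := A)
    rw [← hc] at this
    exact (ENNReal.ofReal_le_one).1 this
  have hK : k.toReal = c⁻¹ := by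
    rw [hkdef, ENNReal.toReal_inv, ENNReal.toReal_ofReal hcpos.le]
  have hK_pos : 0 < k.toReal := by rw [hK]; positivity
  -- map of pi measure along coordinates
  have hmap : ∀ i, p.map (fun x : Fin m → ℝ => x i) = π i := by
    intro i
    ext B hB
    rw [Measure.map_apply (measurable_pi_apply i) hB]
    have hpre : (fun x : Fin m → ℝ => x i) ⁻¹' B
        = Set.pi Set.univ (Function.update (fun _ : Fin m => (Set.univ : Set ℝ)) i B) := by
      ext x
      simp [Function.update_apply]
    rw [hpre, hp, Measure.pi_pi]
    rw [Finset.prod_eq_single i]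
    · simp
    · intro j _ hj
      simp [Function.update_of_ne hj]
    · simp
  have hpplus_le : pplus ≤ k • p := by
    rw [hpplus]
    refine Measure.le_iff'.2 fun s => ?_
    simp only [Measure.smul_apply, smul_eq_mul]
    exact mul_le_mul_right (Measure.restrict_le_self s) k
  haveI hprob_pplus : IsProbabilityMeasure pplus := by
    constructor
    rw [hpplus]
    simp only [Measure.smul_apply, smul_eq_mul, Measure.restrict_apply MeasurableSet.univ,
      Set.univ_inter]
    rw [← hc, hkdef]
    exact ENNReal.inv_mul_cancel hc0 hcoftop
  haveI hprob_πplus : ∀ i, IsProbabilityMeasure (πplus i) := by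
    intro i
    rw [hπplus i]
    exact Measure.isProbabilityMeasure_map (measurable_pi_apply i).aemeasurable
  have h_le : ∀ i, πplus i ≤ k • π i := by
    intro i
    rw [hπplus i, ← hmap i, ← Measure.map_smul]
    exact Measure.map_mono hpplus_le (measurable_pi_apply i)
  have h_ac : ∀ i, πplus i ≪ π i := by
    intro i
    refine Measure.AbsolutelyContinuous.mk fun s hs h0 => ?_
    have := Measure.le_iff'.1 (h_le i) s
    simp only [Measure.smul_apply, smul_eq_mul, h0, mul_zero] at this
    exact le_antisymm this zero_le
  set f : Fin m → ℝ → ℝ≥0∞ := fun i => (πplus i).rnDeriv (π i) with hfdef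
  have hf_meas : ∀ i, Measurable (f i) := fun i => Measure.measurable_rnDeriv _ _
  -- rnDeriv bound
  have h_bound : ∀ i, f i ≤ᵐ[π i] fun _ => k := by
    intro i
    refine ae_le_of_forall_setLIntegral_le_of_sigmaFinite (hf_meas i) fun s hs _ => ?_
    rw [lintegral_const, Measure.restrict_apply MeasurableSet.univ, Set.univ_inter]
    calc ∫⁻ x in s, f i x ∂π i ≤ πplus i s := Measure.setLIntegral_rnDeriv_le s
      _ ≤ (k • π i) s := Measure.le_iff'.1 (h_le i) s
      _ = k * π i s := rfl
  have h_bound' : ∀ i, ∀ᵐ x ∂πplus i, f i x ≤ k := fun i => (h_ac i).ae_le (h_bound i)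
  have h_pos : ∀ i, ∀ᵐ x ∂πplus i, 0 < f i x := fun i => Measure.rnDeriv_pos (h_ac i)
  have h_lt_top : ∀ i, ∀ᵐ x ∂πplus i, f i x < ∞ :=
    fun i => (h_ac i).ae_le (Measure.rnDeriv_lt_top _ _)
  -- integrability of llr
  have h_int : ∀ i, Integrable (fun x => Real.log ((f i x).toReal)) (πplus i) := by
    intro i
    have hwd : (π i).withDensity (f i) = πplus i :=
      Measure.withDensity_rnDeriv_eq _ _ (h_ac i)
    constructor
    · exact ((hf_meas i).ennreal_toReal.log).aestronglyMeasurable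
    · rw [hasFiniteIntegral_def, ← hwd,
        lintegral_withDensity_eq_lintegral_mul _ (hf_meas i)
          ((hf_meas i).ennreal_toReal.log.enorm)]
      set C : ℝ := 1 + k.toReal * |Real.log k.toReal| with hC
      have hC0 : 0 ≤ C := by
        have : 0 ≤ k.toReal * |Real.log k.toReal| := by positivity
        linarith
      have hle : ∀ᵐ x ∂π i, (f i * fun x => (‖Real.log (f i x).toReal‖₊ : ℝ≥0∞)) x
          ≤ ENNReal.ofReal C := by
        filter_upwards [h_bound i, Measure.rnDeriv_lt_top (πplus i) (π i)] with x hxk hxt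
        simp only [Pi.mul_apply]
        set t : ℝ := (f i x).toReal with ht
        have ht0 : 0 ≤ t := ENNReal.toReal_nonneg
        have htk : t ≤ k.toReal := ENNReal.toReal_mono hk_ne_top hxk
        have habs : t * |Real.log t| ≤ C := by
          rcases le_or_gt t 1 with h1 | h1
          · rcases eq_or_lt_of_le ht0 with h0 | h0
            · simp [← h0, hC0]
            · have := (Real.abs_log_mul_self_lt t h0 h1).le
              have h2 : 0 ≤ k.toReal * |Real.log k.toReal| := by positivity
              rw [abs_mul, abs_of_nonneg ht0, mul_comm] at this
              linarith
          · have hlog : |Real.log t| ≤ |Real.log k.toReal| := by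
              have h1k : (1:ℝ) < k.toReal := lt_of_lt_of_le h1 htk
              rw [abs_of_nonneg (Real.log_nonneg h1.le),
                abs_of_nonneg (Real.log_nonneg h1k.le)]
              exact Real.log_le_log (by linarith) htk
            have : t * |Real.log t| ≤ k.toReal * |Real.log k.toReal| :=
              mul_le_mul htk hlog (abs_nonneg _) hK_pos.le
            linarith
        have hfx : f i x = ENNReal.ofReal t := (ENNReal.ofReal_toReal hxt.ne).symm
        calc f i x * (‖Real.log t‖₊ : ℝ≥0∞)
            = ENNReal.ofReal t * ENNReal.ofReal |Real.log t| := by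
              rw [← hfx]
              rw [← Real.enorm_eq_ofReal_abs]; rfl
          _ = ENNReal.ofReal (t * |Real.log t|) := (ENNReal.ofReal_mul ht0).symm
          _ ≤ ENNReal.ofReal C := ENNReal.ofReal_le_ofReal habs
      calc ∫⁻ x, (f i * fun x => (‖Real.log (f i x).toReal‖₊ : ℝ≥0∞)) x ∂π i
          ≤ ∫⁻ _, ENNReal.ofReal C ∂π i := lintegral_mono_ae hle
        _ = ENNReal.ofReal C := by simp
        _ < ∞ := ENNReal.ofReal_lt_top
  -- transfer a.e. properties to pplus
  have h_meas_eval : ∀ i : Fin m, Measurable fun x : Fin m → ℝ => x i := measurable_pi_apply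
  have hae_p : ∀ᵐ x ∂pplus, ∀ i, 0 < f i (x i) ∧ f i (x i) < ∞ ∧ f i (x i) ≤ k := by
    rw [ae_all_iff]
    intro i
    have h1 : ∀ᵐ y ∂πplus i, 0 < f i y ∧ f i y < ∞ ∧ f i y ≤ k :=
      (h_pos i).and ((h_lt_top i).and (h_bound' i))
    rw [hπplus i] at h1
    have hms : MeasurableSet {y : ℝ | 0 < f i y ∧ f i y < ∞ ∧ f i y ≤ k} := by
      have hset : {y : ℝ | 0 < f i y ∧ f i y < ∞ ∧ f i y ≤ k}
          = f i ⁻¹' Set.Ioi 0 ∩ (f i ⁻¹' Set.Iio ∞ ∩ f i ⁻¹' Set.Iic k) := by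
        ext y
        simp [Set.mem_setOf_eq]
      rw [hset]
      exact (hf_meas i measurableSet_Ioi).inter
        ((hf_meas i measurableSet_Iio).inter (hf_meas i measurableSet_Iic))
    exact (ae_map_iff (h_meas_eval i).aemeasurable hms).1 h1
  -- integrability of coordinate llr on pplus
  have h_int_F : ∀ i, Integrable (fun x : Fin m → ℝ => Real.log ((f i (x i)).toReal)) pplus := by
    intro i
    have h2 := h_int i
    rw [hπplus i, integrable_map_measure
      ((hf_meas i).ennreal_toReal.log).aestronglyMeasurable (h_meas_eval i).aemeasurable] at h2
    exact h2
  have h_eq_int : ∀ i, ∫ y, Real.log ((f i y).toReal) ∂πplus i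
      = ∫ x, Real.log ((f i (x i)).toReal) ∂pplus := by
    intro i
    rw [hπplus i, integral_map (h_meas_eval i).aemeasurable
      ((hf_meas i).ennreal_toReal.log).aestronglyMeasurable]
  -- the product density function
  set G : (Fin m → ℝ) → ℝ := fun x => ∏ i, (f i (x i)).toReal with hGdef
  have hG_meas : Measurable G :=
    Finset.measurable_prod _ fun i _ => ((hf_meas i).comp (h_meas_eval i)).ennreal_toReal
  have hG_bound : ∀ᵐ x ∂pplus, ‖G x‖ ≤ k.toReal ^ m := by
    filter_upwards [hae_p] with x hx
    rw [Real.norm_eq_abs, abs_of_nonneg (Finset.prod_nonneg fun i _ => ENNReal.toReal_nonneg)]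
    calc ∏ i, (f i (x i)).toReal ≤ ∏ _i : Fin m, k.toReal :=
        Finset.prod_le_prod (fun i _ => ENNReal.toReal_nonneg)
          (fun i _ => ENNReal.toReal_mono hk_ne_top (hx i).2.2)
      _ = k.toReal ^ m := by simp
  have hG_int : Integrable G pplus :=
    (integrable_const (k.toReal ^ m)).mono' hG_meas.aestronglyMeasurable hG_bound
  -- lintegral bound for the product of densities
  have hprod_meas : Measurable fun x : Fin m → ℝ => ∏ i, f i (x i) :=
    Finset.measurable_prod _ fun i _ => (hf_meas i).comp (h_meas_eval i)
  have h_lint : ∫⁻ x, ∏ i, f i (x i) ∂pplus ≤ k := by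
    calc ∫⁻ x, ∏ i, f i (x i) ∂pplus
        ≤ ∫⁻ x, ∏ i, f i (x i) ∂(k • p) := lintegral_mono' hpplus_le le_rfl
      _ = k * ∫⁻ x, ∏ i, f i (x i) ∂p := lintegral_smul_measure _ _
      _ = k * ∏ i, ∫⁻ t, f i t ∂π i := by
          rw [hp, lintegral_pi_prod_aux π f hf_meas]
      _ ≤ k * 1 := by
          refine mul_le_mul_right ?_ k
          refine Finset.prod_le_one (fun i _ => zero_le) (fun i _ => ?_)
          calc ∫⁻ t, f i t ∂π i ≤ πplus i Set.univ := Measure.lintegral_rnDeriv_le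
            _ = 1 := measure_univ
      _ = k := mul_one k
  have hG_int_eq : ∫ x, G x ∂pplus = (∫⁻ x, ∏ i, f i (x i) ∂pplus).toReal := by
    rw [← integral_toReal hprod_meas.aemeasurable ?_]
    · refine integral_congr_ae (Filter.Eventually.of_forall fun x => ?_)
      exact (ENNReal.toReal_prod _ _).symm
    · filter_upwards [hae_p] with x hx
      exact ENNReal.prod_lt_top fun i _ => (hx i).2.1
  have hG_le : ∫ x, G x ∂pplus ≤ k.toReal := by
    rw [hG_int_eq]
    exact ENNReal.toReal_mono hk_ne_top h_lint
  -- pointwise key inequality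
  have h_sum_int : Integrable (fun x => ∑ i, Real.log ((f i (x i)).toReal)) pplus :=
    integrable_finset_sum _ fun i _ => h_int_F i
  have key : ∀ᵐ x ∂pplus,
      (∑ i, Real.log ((f i (x i)).toReal)) + Real.log c ≤ c * G x - 1 := by
    filter_upwards [hae_p] with x hx
    have hpos : ∀ i ∈ Finset.univ, (f i (x i)).toReal ≠ 0 := fun i _ =>
      (ENNReal.toReal_pos (hx i).1.ne' (hx i).2.1.ne).ne'
    have hGpos : 0 < G x :=
      Finset.prod_pos fun i _ => ENNReal.toReal_pos (hx i).1.ne' (hx i).2.1.ne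
    have h1 : ∑ i, Real.log ((f i (x i)).toReal) = Real.log (G x) :=
      (Real.log_prod hpos).symm
    rw [h1, add_comm, ← Real.log_mul hcpos.ne' hGpos.ne']
    exact Real.log_le_sub_one_of_pos (by positivity)
  have h_main : ∫ x, ((∑ i, Real.log ((f i (x i)).toReal)) + Real.log c) ∂pplus ≤
      ∫ x, (c * G x - 1) ∂pplus :=
    integral_mono_ae (h_sum_int.add (integrable_const _))
      ((hG_int.const_mul c).sub (integrable_const 1)) key
  have lhs_eq : ∫ x, ((∑ i, Real.log ((f i (x i)).toReal)) + Real.log c) ∂pplus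
      = (∑ i, ∫ x, Real.log ((f i (x i)).toReal) ∂pplus) + Real.log c := by
    rw [integral_add h_sum_int (integrable_const _), integral_const,
      integral_finset_sum _ fun i _ => h_int_F i]
    simp
  have rhs_eq : ∫ x, (c * G x - 1) ∂pplus = c * ∫ x, G x ∂pplus - 1 := by
    rw [integral_sub (hG_int.const_mul c) (integrable_const 1), integral_const_mul,
      integral_const]
    simp
  have rhs_le : c * ∫ x, G x ∂pplus - 1 ≤ 0 := by
    have h3 : c * ∫ x, G x ∂pplus ≤ c * k.toReal :=
      mul_le_mul_of_nonneg_left hG_le hcpos.le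
    rw [hK, mul_inv_cancel₀ hcpos.ne'] at h3
    linarith
  rw [lhs_eq, rhs_eq] at h_main
  have final : (∑ i, ∫ x, Real.log ((f i (x i)).toReal) ∂pplus) ≤ - Real.log c := by
    linarith
  calc ∑ i, ∫ x, Real.log (((πplus i).rnDeriv (π i) x).toReal) ∂πplus i
      = ∑ i, ∫ x, Real.log ((f i (x i)).toReal) ∂pplus :=
        Finset.sum_congr rfl fun i _ => h_eq_int i
    _ ≤ - Real.log c := final
end

section
/- Fix a binary symmetric sparsity pattern z with zero diagonal. Let Θ have independent entries with off-diagonal θ_ij = 0 when z_ij = 0 and θ_ij ~ N(0,σ²) when z_ij = 1, and diagonal independent of the off-diagonals. With m_z = Σ_{i<j} z_ij, θ_min = min_i θ_ii, θ_max = max_i θ_ii: E[(2Φ(θ_min/((k−1)σ)) − 1)^{m_z}] ≤ P(Θ ≻ 0 | Z = z) ≤ E[(2Φ(θ_max/σ) − 1)^{m_z}]. -/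
open MeasureTheory ProbabilityTheory Matrix
open scoped ENNReal NNReal



/-- Standard normal cumulative distribution function `Φ`. -/
noncomputable def stdGaussCDF (x : ℝ) : ℝ := ((gaussianReal 0 1) (Set.Iic x)).toReal

/-- Build a symmetric matrix with sparsity pattern `z` from a vector of diagonal
entries `d` and a vector `w` of upper-triangular entries: entries with `z i j`
false are zero. -/
def sparseSymMatrixOf {k : ℕ} (z : Fin k → Fin k → Bool) (d : Fin k → ℝ)
    (w : {p : Fin k × Fin k // p.1 < p.2} → ℝ) : Matrix (Fin k) (Fin k) ℝ :=
  Matrix.of fun i j =>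
    if h : i < j then (if z i j then w ⟨(i, j), h⟩ else 0)
    else if h' : j < i then (if z j i then w ⟨(j, i), h'⟩ else 0) else d i




lemma gaussNoAtoms {v : ℝ≥0} (hv : v ≠ 0) : NoAtoms (gaussianReal 0 v) :=
  ⟨fun x => (gaussianReal_absolutelyContinuous 0 hv) (by simp)⟩

instance : NullSingletonClass (gaussianReal 0 1) := gaussNoAtoms one_ne_zero

lemma stdGaussCDF_nonneg (x : ℝ) : 0 ≤ stdGaussCDF x := ENNReal.toReal_nonneg

lemma stdGaussCDF_le_one (x : ℝ) : stdGaussCDF x ≤ 1 := by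
  have h := prob_le_one (μ := gaussianReal 0 1) (s := Set.Iic x)
  simpa [stdGaussCDF] using ENNReal.toReal_mono ENNReal.one_ne_top h

lemma stdGaussCDF_mono : Monotone stdGaussCDF := fun a b hab =>
  ENNReal.toReal_mono (measure_ne_top _ _) (measure_mono (Set.Iic_subset_Iic.2 hab))

lemma gauss_map_neg : (gaussianReal 0 1).map (fun x : ℝ => -x) = gaussianReal 0 1 := by
  have h := gaussianReal_map_const_mul (μ := 0) (v := 1) (-1)
  have h2 : (NNReal.mk ((-1:ℝ)^2) (sq_nonneg _) * 1 : ℝ≥0) = 1 := by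
    ext; norm_num
  have h3 : (fun x : ℝ => -x) = (fun x : ℝ => -1 * x) := by funext x; ring
  rw [h3, h, h2]; norm_num

lemma stdGaussCDF_neg (a : ℝ) : stdGaussCDF (-a) = 1 - stdGaussCDF a := by
  have hmap : (gaussianReal 0 1) (Set.Iic (-a)) = (gaussianReal 0 1) (Set.Ici a) := by
    conv_lhs => rw [← gauss_map_neg]
    rw [Measure.map_apply measurable_neg measurableSet_Iic]
    congr 1
    ext x
    simp [neg_le]
  have hIci : (gaussianReal 0 1) (Set.Ici a) = (gaussianReal 0 1) (Set.Ioi a) :=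
    (measure_congr (Ioi_ae_eq_Ici (μ := gaussianReal 0 1) (a := a))).symm
  have hcompl : (gaussianReal 0 1) (Set.Ioi a) = 1 - (gaussianReal 0 1) (Set.Iic a) := by
    rw [← Set.compl_Iic, measure_compl measurableSet_Iic (measure_ne_top _ _), measure_univ]
  have : stdGaussCDF (-a) = (1 - (gaussianReal 0 1) (Set.Iic a)).toReal := by
    rw [stdGaussCDF, hmap, hIci, hcompl]
  rw [this, ENNReal.toReal_sub_of_le prob_le_one ENNReal.one_ne_top, ENNReal.toReal_one, stdGaussCDF]

lemma stdGaussCDF_half {x : ℝ} (hx : 0 ≤ x) : (1:ℝ)/2 ≤ stdGaussCDF x := by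
  have h0 := stdGaussCDF_neg 0
  rw [neg_zero] at h0
  have h1 := stdGaussCDF_mono hx
  linarith

lemma gauss_std_Icc {a : ℝ} (ha : 0 ≤ a) :
    gaussianReal 0 1 (Set.Icc (-a) a) = ENNReal.ofReal (2 * stdGaussCDF a - 1) := by
  have hsub : Set.Icc (-a) a = Set.Iic a \ Set.Iio (-a) := by ext x; simp [and_comm]
  rw [hsub, measure_diff (Set.Iio_subset_Iic (by linarith)) measurableSet_Iio.nullMeasurableSet
      (measure_ne_top _ _)]
  have h1 : (gaussianReal 0 1) (Set.Iio (-a)) = (gaussianReal 0 1) (Set.Iic (-a)) :=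
    measure_congr (Iio_ae_eq_Iic)
  rw [h1]
  have h2 : (gaussianReal 0 1) (Set.Iic a) = ENNReal.ofReal (stdGaussCDF a) :=
    (ENNReal.ofReal_toReal (measure_ne_top _ _)).symm
  have h3 : (gaussianReal 0 1) (Set.Iic (-a)) = ENNReal.ofReal (1 - stdGaussCDF a) := by
    rw [← stdGaussCDF_neg]
    exact (ENNReal.ofReal_toReal (measure_ne_top _ _)).symm
  rw [h2, h3, ← ENNReal.ofReal_sub _ (by have := stdGaussCDF_le_one a; linarith)]
  congr 1
  ring

lemma gauss_sigma_Icc {σ : ℝ} (hσ : 0 < σ) {t : ℝ} (ht : 0 ≤ t) :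
    gaussianReal 0 ⟨σ^2, sq_nonneg σ⟩ (Set.Icc (-t) t)
      = ENNReal.ofReal (2 * stdGaussCDF (t/σ) - 1) := by
  have hmap : (gaussianReal 0 1).map (fun x : ℝ => σ * x) = gaussianReal 0 ⟨σ^2, sq_nonneg σ⟩ := by
    have h := gaussianReal_map_const_mul (μ := 0) (v := 1) σ
    simp at h; exact h
  rw [← hmap, Measure.map_apply (measurable_const_mul σ) measurableSet_Icc]
  have hpre : (fun x : ℝ => σ * x) ⁻¹' Set.Icc (-t) t = Set.Icc (-(t/σ)) (t/σ) := by
    rw [Set.preimage_const_mul_Icc₀ _ _ hσ, neg_div]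
  rw [hpre, gauss_std_Icc (div_nonneg ht hσ.le)]

lemma pi_cyl {ι : Type*} [Fintype ι] (μ0 : Measure ℝ) [IsProbabilityMeasure μ0]
    (cond : ι → Prop) [DecidablePred cond] (I : Set ℝ) (hI : MeasurableSet I) :
    Measure.pi (fun _ : ι => μ0) {w : ι → ℝ | ∀ p, cond p → w p ∈ I}
      = μ0 I ^ (Finset.univ.filter cond).card := by
  have hset : {w : ι → ℝ | ∀ p, cond p → w p ∈ I}
      = Set.pi Set.univ (fun p => if cond p then I else Set.univ) := by
    ext w
    simp only [Set.mem_setOf_eq, Set.mem_pi, Set.mem_univ, forall_true_left]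
    refine ⟨fun h p => ?_, fun h p hp => ?_⟩
    · by_cases hp : cond p <;> simp [hp, h p]
    · have := h p; rw [if_pos hp] at this; exact this
  rw [hset, Measure.pi_pi]
  have : ∀ p : ι, μ0 (if cond p then I else Set.univ) = if cond p then μ0 I else 1 := by
    intro p; by_cases hp : cond p <;> simp [hp]
  simp_rw [this]
  rw [Finset.prod_ite, Finset.prod_const, Finset.prod_const, one_pow, mul_one]

lemma card_filter_subtype (k : ℕ) (z : Fin k → Fin k → Bool) :
    (Finset.univ.filter
      (fun p : {p : Fin k × Fin k // p.1 < p.2} => z p.1.1 p.1.2 = true)).card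
    = (Finset.univ.filter
      (fun p : Fin k × Fin k => p.1 < p.2 ∧ z p.1 p.2 = true)).card := by
  apply Finset.card_bij (fun p _ => p.val)
  · rintro ⟨⟨i, j⟩, hij⟩ ha
    simp only [Finset.mem_filter, Finset.mem_univ, true_and] at ha ⊢
    exact ⟨hij, ha⟩
  · rintro ⟨a, _⟩ _ ⟨b, _⟩ _ h
    exact Subtype.ext h
  · rintro ⟨i, j⟩ hb
    simp only [Finset.mem_filter, Finset.mem_univ, true_and] at hb
    exact ⟨⟨⟨i, j⟩, hb.1⟩, by simp [hb.2], rfl⟩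



section MatrixLemmas
variable {k : ℕ} {z : Fin k → Fin k → Bool} {d : Fin k → ℝ}
  {w : {p : Fin k × Fin k // p.1 < p.2} → ℝ}

lemma sSM_diag (i : Fin k) : sparseSymMatrixOf z d w i i = d i := by
  simp [sparseSymMatrixOf]

lemma sSM_lt {i j : Fin k} (h : i < j) :
    sparseSymMatrixOf z d w i j = if z i j then w ⟨(i, j), h⟩ else 0 := by
  simp [sparseSymMatrixOf, h]

lemma sSM_symm (i j : Fin k) :
    sparseSymMatrixOf z d w j i = sparseSymMatrixOf z d w i j := by
  rcases lt_trichotomy i j with h | h | h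
  · simp [sparseSymMatrixOf, h, asymm h]
  · subst h; rfl
  · simp [sparseSymMatrixOf, h, asymm h]

lemma sSM_abs_lt {i j : Fin k} (hij : i ≠ j) {t : ℝ} (ht : 0 < t)
    (hw : ∀ p : {p : Fin k × Fin k // p.1 < p.2}, z p.1.1 p.1.2 = true → |w p| < t) :
    |sparseSymMatrixOf z d w i j| < t := by
  rcases lt_or_gt_of_ne hij with h | h
  · rw [sSM_lt h]
    split
    · exact hw _ (by assumption)
    · simpa using ht
  · rw [sSM_symm, sSM_lt h]
    split
    · exact hw _ (by assumption)
    · simpa using ht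

/-- strictly diagonally dominant symmetric real matrices are positive definite -/
lemma posDef_of_dominant {M : Matrix (Fin k) (Fin k) ℝ}
    (hsym : ∀ i j, M j i = M i j)
    (hdom : ∀ i, ∑ j ∈ Finset.univ.erase i, |M i j| < M i i) :
    M.PosDef := by
  refine Matrix.PosDef.of_dotProduct_mulVec_pos ?_ ?_
  · ext i j
    simp [Matrix.conjTranspose_apply, hsym]
  · intro x hx
    have hx' : star x = x := by funext i; simp
    rw [hx']
    -- swap lemma
    have swap : ∀ g : Fin k → Fin k → ℝ,
        ∑ i, ∑ j ∈ Finset.univ.erase i, g i j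
          = ∑ j, ∑ i ∈ Finset.univ.erase j, g i j := by
      intro g
      have h1 : ∀ (i : Fin k) (g' : Fin k → ℝ), ∑ j ∈ Finset.univ.erase i, g' j
          = ∑ j, if j = i then 0 else g' j := by
        intro i g'
        rw [Finset.sum_ite, Finset.sum_const, smul_zero, zero_add]
        congr 1
        rw [← Finset.filter_ne']
      simp_rw [h1]
      rw [Finset.sum_comm]
      refine Finset.sum_congr rfl fun j _ => Finset.sum_congr rfl fun i _ => ?_
      congr 1
      exact propext ⟨Eq.symm, Eq.symm⟩
    have expand : x ⬝ᵥ (M *ᵥ x)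
        = ∑ i, x i * (M i i * x i)
          + ∑ i, ∑ j ∈ Finset.univ.erase i, x i * (M i j * x j) := by
      have : x ⬝ᵥ (M *ᵥ x) = ∑ i, ∑ j, x i * (M i j * x j) := by
        simp [dotProduct, Matrix.mulVec, Finset.mul_sum]
      rw [this, ← Finset.sum_add_distrib]
      congr 1
      funext i
      exact (Finset.add_sum_erase _ _ (Finset.mem_univ i)).symm
    have lower : ∀ i : Fin k, ∀ j ∈ Finset.univ.erase i,
        -(|M i j| * (x i ^ 2 + x j ^ 2) / 2) ≤ x i * (M i j * x j) := by
      intro i j _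
      have h1 : 0 ≤ (|M i j| + M i j) * (x i + x j)^2 :=
        mul_nonneg (by have := neg_abs_le (M i j); linarith) (sq_nonneg _)
      have h2 : 0 ≤ (|M i j| - M i j) * (x i - x j)^2 :=
        mul_nonneg (by have := le_abs_self (M i j); linarith) (sq_nonneg _)
      nlinarith [h1, h2]
    have lower2 : -∑ i, ∑ j ∈ Finset.univ.erase i, |M i j| * (x i ^ 2 + x j ^ 2) / 2
        ≤ ∑ i, ∑ j ∈ Finset.univ.erase i, x i * (M i j * x j) := by
      rw [← Finset.sum_neg_distrib]
      refine Finset.sum_le_sum fun i _ => ?_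
      rw [← Finset.sum_neg_distrib]
      exact Finset.sum_le_sum (lower i)
    have split : ∑ i, ∑ j ∈ Finset.univ.erase i, |M i j| * (x i ^ 2 + x j ^ 2) / 2
        = ∑ i, (∑ j ∈ Finset.univ.erase i, |M i j|) * x i ^ 2 := by
      have hterm : ∀ i j : Fin k, |M i j| * (x i ^ 2 + x j ^ 2) / 2
          = |M i j| * x i ^ 2 / 2 + |M i j| * x j ^ 2 / 2 := by intro i j; ring
      simp_rw [hterm, Finset.sum_add_distrib]
      rw [swap (fun i j => |M i j| * x j ^ 2 / 2)]
      have hs2 : ∀ j : Fin k, ∑ i ∈ Finset.univ.erase j, |M i j| * x j ^ 2 / 2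
          = ∑ i ∈ Finset.univ.erase j, |M j i| * x j ^ 2 / 2 := by
        intro j
        refine Finset.sum_congr rfl fun i _ => ?_
        rw [hsym i j]
      simp_rw [hs2]
      rw [← Finset.sum_add_distrib]
      refine Finset.sum_congr rfl fun i _ => ?_
      rw [← Finset.sum_add_distrib, Finset.sum_mul]
      refine Finset.sum_congr rfl fun j _ => ?_
      ring
    have pos : 0 < ∑ i, (M i i - ∑ j ∈ Finset.univ.erase i, |M i j|) * x i ^ 2 := by
      have hcoef : ∀ i, 0 < M i i - ∑ j ∈ Finset.univ.erase i, |M i j| :=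
        fun i => sub_pos.2 (hdom i)
      obtain ⟨i0, hi0⟩ := Function.ne_iff.1 hx
      refine Finset.sum_pos' (fun i _ => mul_nonneg (hcoef i).le (sq_nonneg _)) ⟨i0, Finset.mem_univ i0, ?_⟩
      have hxi : (0:ℝ) < x i0 ^ 2 :=
        lt_of_le_of_ne (sq_nonneg _) (Ne.symm (pow_ne_zero _ hi0))
      exact mul_pos (hcoef i0) hxi
    have final : ∑ i, (M i i - ∑ j ∈ Finset.univ.erase i, |M i j|) * x i ^ 2
        ≤ x ⬝ᵥ (M *ᵥ x) := by
      rw [expand]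
      have : ∀ i : Fin k, (M i i - ∑ j ∈ Finset.univ.erase i, |M i j|) * x i ^ 2
          = x i * (M i i * x i) - (∑ j ∈ Finset.univ.erase i, |M i j|) * x i ^ 2 := by
        intro i; ring
      simp_rw [this, Finset.sum_sub_distrib]
      have := lower2
      rw [split] at this
      linarith
    exact lt_of_lt_of_le pos final

lemma posDef_diag_pos {M : Matrix (Fin k) (Fin k) ℝ} (h : M.PosDef) (i : Fin k) :
    0 < M i i := by
  have hx : (Pi.single i 1 : Fin k → ℝ) ≠ 0 := by
    intro h0
    have := congrFun h0 i
    simp at this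
  have h2 := h.dotProduct_mulVec_pos hx
  have hst : star (Pi.single i 1 : Fin k → ℝ) = Pi.single i 1 := by funext j; simp
  rw [hst] at h2
  simpa [Matrix.mulVec_single, single_dotProduct] using h2

lemma posDef_entry_sq {M : Matrix (Fin k) (Fin k) ℝ} (h : M.PosDef) {i j : Fin k}
    (hij : i ≠ j) : (M i j) ^ 2 < M i i * M j j := by
  have hji : M j i = M i j := by
    have := congrFun (congrFun h.1 j) i
    exact (by simpa [Matrix.conjTranspose_apply] using this : M i j = M j i).symm
  have hjj := posDef_diag_pos h j
  set x : Fin k → ℝ := Pi.single i (M j j) + Pi.single j (-(M i j)) with hxdef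
  have hx : x ≠ 0 := by
    intro h0
    have := congrFun h0 i
    simp only [hxdef, Pi.add_apply, Pi.single_eq_same, Pi.zero_apply] at this
    rw [Pi.single_eq_of_ne hij] at this
    linarith
  have h2 := h.dotProduct_mulVec_pos hx
  have hst : star x = x := by funext l; simp
  rw [hst] at h2
  have hval : x ⬝ᵥ (M *ᵥ x) = M j j * (M i i * M j j - M i j ^ 2) := by
    simp only [hxdef, Matrix.mulVec_add, Matrix.mulVec_single, add_dotProduct,
      dotProduct_add, single_dotProduct, Pi.add_apply]
    simp [Pi.single_eq_of_ne hij, Pi.single_eq_of_ne hij.symm, hji]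
    ring
  rw [hval] at h2
  nlinarith [h2, hjj]

end MatrixLemmas

set_option maxHeartbeats 1000000 in
/-- For a fixed sparsity pattern `z` (binary, symmetric, zero diagonal), a random
symmetric matrix with independent entries, off-diagonal `θ_ij = 0` when `z_ij = 0`
and `θ_ij ~ N(0, σ²)` when `z_ij = 1`, independent of the diagonal, satisfies,
with `m_z = Σ_{i<j} z_ij`, `θ_min = min_i θ_ii` and `θ_max = max_i θ_ii`:
`E[(2Φ(θ_min/((k−1)σ)) − 1)^{m_z}] ≤ P(Θ ≻ 0 | Z = z) ≤ E[(2Φ(θ_max/σ) − 1)^{m_z}]`. -/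
theorem stmt_14 (k : ℕ) (hk : 2 ≤ k) (σ : ℝ) (hσ : 0 < σ)
    (z : Fin k → Fin k → Bool) (hzsym : ∀ i j, z i j = z j i) (hzdiag : ∀ i, z i i = false)
    (μD : Measure (Fin k → ℝ)) [IsProbabilityMeasure μD]
    (hpos : ∀ᵐ d ∂μD, ∀ i, 0 < d i)
    (μW : Measure ({p : Fin k × Fin k // p.1 < p.2} → ℝ))
    (hμW : μW = Measure.pi (fun _ => gaussianReal 0 ⟨σ ^ 2, sq_nonneg σ⟩))
    (mz : ℕ)
    (hmz : mz = (Finset.univ.filter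
      (fun p : Fin k × Fin k => p.1 < p.2 ∧ z p.1 p.2 = true)).card) :
    ENNReal.ofReal
        (∫ d, (2 * stdGaussCDF ((⨅ i, d i) / ((k - 1) * σ)) - 1) ^ mz ∂μD) ≤
      (μD.prod μW) {x | (sparseSymMatrixOf z x.1 x.2).PosDef} ∧
    (μD.prod μW) {x | (sparseSymMatrixOf z x.1 x.2).PosDef} ≤
      ENNReal.ofReal (∫ d, (2 * stdGaussCDF ((⨆ i, d i) / σ) - 1) ^ mz ∂μD) := by
  
  subst hμW
  subst hmz
  haveI : Nonempty (Fin k) := ⟨⟨0, by omega⟩⟩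
  have hv : (⟨σ ^ 2, sq_nonneg σ⟩ : ℝ≥0) ≠ 0 := by
    intro h0
    exact (pow_pos hσ 2).ne' (congrArg NNReal.toReal h0)
  set μ0 : Measure ℝ := gaussianReal 0 ⟨σ ^ 2, sq_nonneg σ⟩ with hμ0
  haveI : NullSingletonClass μ0 := gaussNoAtoms hv
  haveI : IsProbabilityMeasure μ0 := instIsProbabilityMeasureGaussianReal 0 _
  set mzc := (Finset.univ.filter
      (fun p : Fin k × Fin k => p.1 < p.2 ∧ z p.1 p.2 = true)).card with hmzc
  set s : Set ((Fin k → ℝ) × ({p : Fin k × Fin k // p.1 < p.2} → ℝ)) :=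
    {x | (sparseSymMatrixOf z x.1 x.2).PosDef} with hs
  have hkR : (0:ℝ) < (k:ℝ) - 1 := by
    have : (2:ℝ) ≤ (k:ℝ) := by exact_mod_cast hk
    linarith
  have hΦm : Measurable stdGaussCDF := stdGaussCDF_mono.measurable
  have hbase : ∀ x : ℝ, |2 * stdGaussCDF x - 1| ≤ 1 := by
    intro x
    have h1 := stdGaussCDF_nonneg x
    have h2 := stdGaussCDF_le_one x
    rw [abs_le]; constructor <;> linarith
  have hbase' : ∀ x : ℝ, 0 ≤ x → 0 ≤ 2 * stdGaussCDF x - 1 := by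
    intro x hx
    have := stdGaussCDF_half hx
    linarith
  -- cylinder measure computations
  have hcylIoo : ∀ t : ℝ, 0 ≤ t →
      Measure.pi (fun _ : {p : Fin k × Fin k // p.1 < p.2} => μ0)
        {w : {p : Fin k × Fin k // p.1 < p.2} → ℝ |
          ∀ p, z p.1.1 p.1.2 = true → |w p| < t}
      = ENNReal.ofReal ((2 * stdGaussCDF (t / σ) - 1) ^ mzc) := by
    intro t ht
    have hset : {w : {p : Fin k × Fin k // p.1 < p.2} → ℝ |
          ∀ p, z p.1.1 p.1.2 = true → |w p| < t}
        = {w | ∀ p, z p.1.1 p.1.2 = true → w p ∈ Set.Ioo (-t) t} := by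
      ext w; simp [Set.mem_Ioo, abs_lt]
    rw [hset, pi_cyl μ0 _ _ measurableSet_Ioo,
      measure_congr (Ioo_ae_eq_Icc), hμ0, gauss_sigma_Icc hσ ht,
      card_filter_subtype, ← ENNReal.ofReal_pow (hbase' _ (div_nonneg ht hσ.le))]
  have hcylIcc : ∀ t : ℝ, 0 ≤ t →
      Measure.pi (fun _ : {p : Fin k × Fin k // p.1 < p.2} => μ0)
        {w : {p : Fin k × Fin k // p.1 < p.2} → ℝ |
          ∀ p, z p.1.1 p.1.2 = true → |w p| ≤ t}
      = ENNReal.ofReal ((2 * stdGaussCDF (t / σ) - 1) ^ mzc) := by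
    intro t ht
    have hset : {w : {p : Fin k × Fin k // p.1 < p.2} → ℝ |
          ∀ p, z p.1.1 p.1.2 = true → |w p| ≤ t}
        = {w | ∀ p, z p.1.1 p.1.2 = true → w p ∈ Set.Icc (-t) t} := by
      ext w; simp [Set.mem_Icc, abs_le]
    rw [hset, pi_cyl μ0 _ _ measurableSet_Icc, hμ0, gauss_sigma_Icc hσ ht,
      card_filter_subtype, ← ENNReal.ofReal_pow (hbase' _ (div_nonneg ht hσ.le))]
  constructor
  · -- lower bound
    set f : (Fin k → ℝ) → ℝ :=
      fun d => (2 * stdGaussCDF ((⨅ i, d i) / (((k:ℝ) - 1) * σ)) - 1) ^ mzc with hf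
    have hfm : Measurable f := by
      apply Measurable.pow_const
      apply Measurable.sub _ measurable_const
      exact (measurable_const.mul (hΦm.comp
        ((Measurable.iInf fun i => measurable_pi_apply i).div_const _)))
    have hfi : Integrable f μD := by
      refine Integrable.mono' (integrable_const 1) hfm.aestronglyMeasurable
        (Filter.Eventually.of_forall fun d => ?_)
      rw [hf]
      simp only [Real.norm_eq_abs, abs_pow]
      exact pow_le_one₀ (abs_nonneg _) (hbase _)
    have hfnn : 0 ≤ᵐ[μD] f := by
      filter_upwards [hpos] with d hd
      have hinf : 0 ≤ (⨅ i, d i) := le_ciInf fun i => (hd i).le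
      exact pow_nonneg (hbase' _ (div_nonneg hinf (by positivity))) _
    rw [ofReal_integral_eq_lintegral_ofReal hfi hfnn,
      ← measure_toMeasurable s, Measure.prod_apply (measurableSet_toMeasurable _ _)]
    refine lintegral_mono_ae ?_
    filter_upwards [hpos] with d hd
    have hinfpos : 0 < (⨅ i, d i) := by
      obtain ⟨i0, hi0⟩ := Finite.exists_min d
      have : (⨅ i, d i) = d i0 :=
        le_antisymm (ciInf_le (Finite.bddBelow_range d) i0) (le_ciInf hi0)
      rw [this]; exact hd i0
    set t := (⨅ i, d i) / ((k:ℝ) - 1) with htdef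
    have htpos : 0 < t := div_pos hinfpos hkR
    have hdd : (⨅ i, d i) / (((k:ℝ) - 1) * σ) = t / σ := (div_div _ _ _).symm
    have hsubset : {w : {p : Fin k × Fin k // p.1 < p.2} → ℝ |
          ∀ p, z p.1.1 p.1.2 = true → |w p| < t}
        ⊆ Prod.mk d ⁻¹' toMeasurable (μD.prod (Measure.pi fun _ => μ0)) s := by
      intro w hw
      apply subset_toMeasurable
      show (sparseSymMatrixOf z d w).PosDef
      apply posDef_of_dominant (fun i j => sSM_symm i j)
      intro i
      rw [sSM_diag]
      have hne : (Finset.univ.erase i).Nonempty := by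
        rw [← Finset.card_pos, Finset.card_erase_of_mem (Finset.mem_univ i),
          Finset.card_univ, Fintype.card_fin]
        omega
      calc ∑ j ∈ Finset.univ.erase i, |sparseSymMatrixOf z d w i j|
          < ∑ _j ∈ Finset.univ.erase i, t := by
            refine Finset.sum_lt_sum_of_nonempty hne fun j hj => ?_
            exact sSM_abs_lt (Finset.ne_of_mem_erase hj).symm htpos hw
        _ = ((k:ℝ) - 1) * t := by
            rw [Finset.sum_const, Finset.card_erase_of_mem (Finset.mem_univ i),
              Finset.card_univ, Fintype.card_fin, nsmul_eq_mul,
              Nat.cast_sub (by omega), Nat.cast_one]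
        _ = (⨅ i, d i) := by
            rw [htdef, mul_div_cancel₀ _ hkR.ne']
        _ ≤ d i := ciInf_le (Finite.bddBelow_range d) i
    calc ENNReal.ofReal (f d)
        = Measure.pi (fun _ : {p : Fin k × Fin k // p.1 < p.2} => μ0)
            {w | ∀ p, z p.1.1 p.1.2 = true → |w p| < t} := by
          show ENNReal.ofReal ((2 * stdGaussCDF ((⨅ i, d i) / (((k:ℝ) - 1) * σ)) - 1) ^ mzc)
              = _
          rw [hdd, hcylIoo t htpos.le]
      _ ≤ _ := measure_mono hsubset
  · -- upper bound
    set g : (Fin k → ℝ) → ℝ :=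
      fun d => (2 * stdGaussCDF ((⨆ i, d i) / σ) - 1) ^ mzc with hg
    have hgm : Measurable g := by
      apply Measurable.pow_const
      apply Measurable.sub _ measurable_const
      exact (measurable_const.mul (hΦm.comp
        ((Measurable.iSup fun i => measurable_pi_apply i).div_const _)))
    have hgi : Integrable g μD := by
      refine Integrable.mono' (integrable_const 1) hgm.aestronglyMeasurable
        (Filter.Eventually.of_forall fun d => ?_)
      rw [hg]
      simp only [Real.norm_eq_abs, abs_pow]
      exact pow_le_one₀ (abs_nonneg _) (hbase _)
    have hgnn : 0 ≤ᵐ[μD] g := by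
      filter_upwards [hpos] with d hd
      have hsup : 0 ≤ (⨆ i, d i) :=
        le_trans (hd (Classical.arbitrary _)).le
          (le_ciSup (Finite.bddAbove_range d) _)
      exact pow_nonneg (hbase' _ (div_nonneg hsup hσ.le)) _
    set U : Set ((Fin k → ℝ) × ({p : Fin k × Fin k // p.1 < p.2} → ℝ)) :=
      {x | ∀ p : {p : Fin k × Fin k // p.1 < p.2},
        z p.1.1 p.1.2 = true → |x.2 p| ≤ ⨆ i, x.1 i} with hUdef
    have hUmeas : MeasurableSet U := by
      have : U = ⋂ p : {p : Fin k × Fin k // p.1 < p.2},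
          {x : (Fin k → ℝ) × ({p : Fin k × Fin k // p.1 < p.2} → ℝ) |
            z p.1.1 p.1.2 = true → |x.2 p| ≤ ⨆ i, x.1 i} := by
        ext x; simp [hUdef, Set.mem_iInter]
      rw [this]
      refine MeasurableSet.iInter fun p => ?_
      by_cases hzp : z p.1.1 p.1.2 = true
      · simp only [hzp, forall_true_left]
        exact measurableSet_le (measurable_snd.eval.abs)
          (Measurable.iSup fun i => measurable_fst.eval)
      · simp [hzp]
    have hsub : s ⊆ U := by
      rintro ⟨d, w⟩ hx
      rintro ⟨⟨i, j⟩, hij⟩ hzp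
      have hM := hx
      rw [hs, Set.mem_setOf_eq] at hM
      have hMij : sparseSymMatrixOf z d w i j = w ⟨(i, j), hij⟩ := by
        rw [sSM_lt hij, if_pos hzp]
      have hdi : 0 < d i := by
        have := posDef_diag_pos hM i; rwa [sSM_diag] at this
      have hdj : 0 < d j := by
        have := posDef_diag_pos hM j; rwa [sSM_diag] at this
      have hsq : (w ⟨(i, j), hij⟩) ^ 2 < d i * d j := by
        have := posDef_entry_sq hM (ne_of_lt hij)
        rwa [hMij, sSM_diag, sSM_diag] at this
      have hSi : d i ≤ ⨆ i, d i := le_ciSup (Finite.bddAbove_range d) i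
      have hSj : d j ≤ ⨆ i, d i := le_ciSup (Finite.bddAbove_range d) j
      show |w ⟨(i, j), hij⟩| ≤ ⨆ i, d i
      nlinarith [sq_abs (w ⟨(i, j), hij⟩), abs_nonneg (w ⟨(i, j), hij⟩)]
    calc (μD.prod (Measure.pi fun _ => μ0)) s
        ≤ (μD.prod (Measure.pi fun _ => μ0)) U := measure_mono hsub
      _ = ∫⁻ d, Measure.pi (fun _ : {p : Fin k × Fin k // p.1 < p.2} => μ0)
            (Prod.mk d ⁻¹' U) ∂μD := Measure.prod_apply hUmeas
      _ = ∫⁻ d, ENNReal.ofReal (g d) ∂μD := by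
          refine lintegral_congr_ae ?_
          filter_upwards [hpos] with d hd
          have hsup : 0 ≤ (⨆ i, d i) :=
            le_trans (hd (Classical.arbitrary _)).le
              (le_ciSup (Finite.bddAbove_range d) _)
          have hpre : Prod.mk d ⁻¹' U
              = {w : {p : Fin k × Fin k // p.1 < p.2} → ℝ |
                  ∀ p, z p.1.1 p.1.2 = true → |w p| ≤ ⨆ i, d i} := rfl
          rw [hpre, hcylIcc _ hsup]
      _ = ENNReal.ofReal (∫ d, g d ∂μD) :=
          (ofReal_integral_eq_lintegral_ofReal hgi hgnn).symm
end
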